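/- If P is a full-dimensional perfectly centered polytope in ℝ^d, then its dual polytope P* is also perfectly centered. -/

import Mathlib

open Pointwise RealInnerProductSpace

noncomputable section

abbrev E (d : ℕ) : Type := EuclideanSpace ℝ (Fin d)

def IsPolytope {d : ℕ} (P : Set (E d)) : Prop :=
  ∃ V : Finset (E d), V.Nonempty ∧ P = convexHull ℝ (V : Set (E d))

def maximizers {d : ℕ} (P : Set (E d)) (c : E d) : Set (E d) :=
  {x ∈ P | ∀ y ∈ P, ⟪y, c⟫ ≤ ⟪x, c⟫}

def IsFace {d : ℕ} (P F : Set (E d)) : Prop :=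
  F = ∅ ∨ F = P ∨ ∃ c : E d, c ≠ 0 ∧ F = maximizers P c

def IsNontrivialFace {d : ℕ} (P F : Set (E d)) : Prop :=
  IsFace P F ∧ F ≠ ∅ ∧ F ≠ P

def polarDual {d : ℕ} (P : Set (E d)) : Set (E d) :=
  {x | ∀ y ∈ P, ⟪x, y⟫ ≤ 1}

def dualFace {d : ℕ} (P F : Set (E d)) : Set (E d) :=
  {x ∈ polarDual P | ∀ f ∈ F, ⟪x, f⟫ = 1}

def normalCone {d : ℕ} (P F : Set (E d)) : Set (E d) :=
  {c | maximizers P c = F}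

def IsPerfectlyCentered {d : ℕ} (P : Set (E d)) : Prop :=
  ∀ F : Set (E d), IsFace P F → F.Nonempty →
    (intrinsicInterior ℝ F ∩ normalCone P F).Nonempty

def dimSet {d : ℕ} (F : Set (E d)) : ℕ :=
  Module.finrank ℝ (affineSpan ℝ F).direction

def fVec {d : ℕ} (P : Set (E d)) (k : ℕ) : ℕ :=
  {F : Set (E d) | IsFace P F ∧ F.Nonempty ∧ dimSet F = k}.ncard

/-! ### Auxiliary lemmas -/

section Aux

variable {d : ℕ}

theorem mem_II_iff {s : Set (E d)} {x : E d} (hxs : x ∈ s) :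
    x ∈ intrinsicInterior ℝ s ↔
      ∃ ε > 0, ∀ z ∈ (affineSpan ℝ s : Set (E d)), dist z x < ε → z ∈ s := by
  constructor
  · rintro ⟨y, hy, rfl⟩
    rw [mem_interior_iff_mem_nhds, Metric.mem_nhds_iff] at hy
    obtain ⟨ε, hε, hball⟩ := hy
    refine ⟨ε, hε, fun z hz hdist => ?_⟩
    have : (⟨z, hz⟩ : affineSpan ℝ s) ∈ Metric.ball y ε := by
      simpa [Metric.mem_ball, Subtype.dist_eq] using hdist
    exact hball this
  · rintro ⟨ε, hε, h⟩
    have hx : x ∈ affineSpan ℝ s := subset_affineSpan ℝ s hxs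
    refine ⟨⟨x, hx⟩, ?_, rfl⟩
    rw [mem_interior_iff_mem_nhds, Metric.mem_nhds_iff]
    refine ⟨ε, hε, fun z hz => ?_⟩
    exact h z z.2 (by simpa [Metric.mem_ball, Subtype.dist_eq] using hz)

theorem extend_mem {s : Set (E d)} {x f : E d} (hx : x ∈ intrinsicInterior ℝ s)
    (hf : f ∈ s) : ∃ t : ℝ, 0 < t ∧ x + t • (x - f) ∈ s := by
  have hxs : x ∈ s := intrinsicInterior_subset hx
  obtain ⟨ε, hε, h⟩ := (mem_II_iff hxs).1 hx
  by_cases hxf : x = f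
  · exact ⟨1, one_pos, by simp [hxf, hf]⟩
  · have hne : ‖x - f‖ > 0 := by
      simpa [sub_eq_zero] using hxf
    set t : ℝ := ε / (2 * ‖x - f‖) with ht
    have ht0 : 0 < t := by positivity
    refine ⟨t, ht0, h _ ?_ ?_⟩
    · have : x + t • (x - f) = t • (x -ᵥ f) +ᵥ x := by
        simp [vsub_eq_sub, vadd_eq_add]; abel
      rw [this]
      exact AffineSubspace.smul_vsub_vadd_mem _ t (subset_affineSpan ℝ s hxs)
        (subset_affineSpan ℝ s hf) (subset_affineSpan ℝ s hxs)
    · have : dist (x + t • (x - f)) x = t * ‖x - f‖ := by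
        rw [dist_eq_norm]
        simp [norm_smul, abs_of_pos ht0]
      rw [this, ht, div_mul_eq_mul_div, div_lt_iff₀ (by positivity)]
      nlinarith

theorem combo_mem_II {s : Set (E d)} (hconv : Convex ℝ s) {z w : E d}
    (hz : z ∈ intrinsicInterior ℝ s) (hw : w ∈ s) {t : ℝ} (ht0 : 0 < t) (ht1 : t ≤ 1) :
    t • z + (1 - t) • w ∈ intrinsicInterior ℝ s := by
  have hzs : z ∈ s := intrinsicInterior_subset hz
  obtain ⟨ε, hε, h⟩ := (mem_II_iff hzs).1 hz
  set x : E d := t • z + (1 - t) • w with hxdef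
  have hxs : x ∈ s := hconv hzs hw ht0.le (by linarith) (by ring)
  rw [mem_II_iff hxs]
  refine ⟨t * ε, by positivity, fun u hu hdist => ?_⟩
  set z' : E d := z + t⁻¹ • (u - x) with hz'def
  have hz's : z' ∈ s := by
    refine h _ ?_ ?_
    · have : z' = t⁻¹ • (u -ᵥ x) +ᵥ z := by
        simp only [hz'def, vsub_eq_sub, vadd_eq_add]; abel
      rw [this]
      exact AffineSubspace.smul_vsub_vadd_mem _ _ hu (subset_affineSpan ℝ s hxs)
        (subset_affineSpan ℝ s hzs)
    · have : dist z' z = t⁻¹ * ‖u - x‖ := by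
        have h2 : z' - z = t⁻¹ • (u - x) := by simp [hz'def]
        rw [dist_eq_norm, h2, norm_smul, Real.norm_eq_abs, abs_of_pos (inv_pos.2 ht0)]
      rw [this]
      rw [dist_eq_norm] at hdist
      calc t⁻¹ * ‖u - x‖ < t⁻¹ * (t * ε) := by
            exact mul_lt_mul_of_pos_left hdist (inv_pos.2 ht0)
        _ = ε := by field_simp
  have : u = t • z' + (1 - t) • w := by
    simp [hz'def, smul_add, smul_smul, mul_inv_cancel₀ ht0.ne', hxdef]
    module
  rw [this]
  exact hconv hz's hw ht0.le (by linarith) (by ring)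

theorem convex_II {s : Set (E d)} (hconv : Convex ℝ s) :
    Convex ℝ (intrinsicInterior ℝ s) := by
  intro a ha b hb p q hp hq hpq
  rcases eq_or_lt_of_le hp with h0 | h0
  · have : q = 1 := by linarith
    simpa [← h0, this] using hb
  · have : q = 1 - p := by linarith
    subst this
    exact combo_mem_II hconv ha (intrinsicInterior_subset hb) h0 (by linarith)

open Classical in
def argmax {d : ℕ} (V : Finset (E d)) (c : E d) : Finset (E d) :=
  V.filter (fun v => ∀ w ∈ V, ⟪w, c⟫ ≤ ⟪v, c⟫)

theorem mem_argmax {V : Finset (E d)} {c v : E d} :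
    v ∈ argmax V c ↔ v ∈ V ∧ ∀ w ∈ V, ⟪w, c⟫ ≤ ⟪v, c⟫ := by
  classical simp [argmax]

theorem argmax_subset {V : Finset (E d)} {c : E d} : argmax V c ⊆ V :=
  fun v hv => (mem_argmax.1 hv).1

theorem argmax_nonempty {V : Finset (E d)} (hV : V.Nonempty) (c : E d) :
    (argmax V c).Nonempty := by
  obtain ⟨v, hv, hmax⟩ := V.exists_max_image (fun v => ⟪v, c⟫) hV
  exact ⟨v, mem_argmax.2 ⟨hv, hmax⟩⟩

theorem inner_le_of_hull {V : Finset (E d)} {c : E d} {m : ℝ}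
    (h : ∀ v ∈ V, ⟪v, c⟫ ≤ m) : ∀ y ∈ convexHull ℝ (V : Set (E d)), ⟪y, c⟫ ≤ m := by
  have hlin : IsLinearMap ℝ (fun y : E d => ⟪y, c⟫) :=
    ⟨fun a b => by rw [inner_add_left], fun r a => by simp [real_inner_smul_left, Finset.mul_sum, mul_assoc]⟩
  exact fun y hy => convexHull_min h (convex_halfSpace_le hlin m) hy

theorem inner_eq_of_hull {V : Finset (E d)} {c : E d} {m : ℝ}
    (h : ∀ v ∈ V, ⟪v, c⟫ = m) : ∀ y ∈ convexHull ℝ (V : Set (E d)), ⟪y, c⟫ = m := by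
  have hlin : IsLinearMap ℝ (fun y : E d => ⟪y, c⟫) :=
    ⟨fun a b => by rw [inner_add_left], fun r a => by simp [real_inner_smul_left, Finset.mul_sum, mul_assoc]⟩
  exact fun y hy => convexHull_min h (convex_hyperplane hlin m) hy

theorem argmax_inner_eq {V : Finset (E d)} {c : E d} {v₀ : E d} (hv₀ : v₀ ∈ argmax V c)
    {v : E d} (hv : v ∈ argmax V c) : ⟪v, c⟫ = ⟪v₀, c⟫ := by
  rw [mem_argmax] at hv₀ hv
  exact le_antisymm (hv₀.2 v hv.1) (hv.2 v₀ hv₀.1)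

theorem maximizers_hull (V : Finset (E d)) (hV : V.Nonempty) (c : E d) :
    maximizers (convexHull ℝ (V : Set (E d))) c
      = convexHull ℝ ((argmax V c : Finset (E d)) : Set (E d)) := by
  obtain ⟨v₀, hv₀⟩ := argmax_nonempty hV c
  have hv₀V : v₀ ∈ V := argmax_subset hv₀
  set m : ℝ := ⟪v₀, c⟫ with hm
  have hle : ∀ v ∈ V, ⟪v, c⟫ ≤ m := (mem_argmax.1 hv₀).2
  have hhull_le := inner_le_of_hull hle
  have heqA : ∀ v ∈ (argmax V c : Finset (E d)), ⟪v, c⟫ = m :=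
    fun v hv => argmax_inner_eq hv₀ hv
  apply Set.Subset.antisymm
  · rintro x ⟨hxP, hxmax⟩
    have hxm : ⟪x, c⟫ = m := by
      have h1 : ⟪x, c⟫ ≤ m := hhull_le x hxP
      have h2 : m ≤ ⟪x, c⟫ := hxmax v₀ (subset_convexHull ℝ _ hv₀V)
      linarith
    rw [Finset.convexHull_eq] at hxP ⊢
    obtain ⟨w, hw0, hw1, hwx⟩ := hxP
    have hkey : ∀ v ∈ V, w v * (m - ⟪v, c⟫) = 0 := by
      have hsum : ∑ v ∈ V, w v * (m - ⟪v, c⟫) = 0 := by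
        have hx' : V.centerMass w id = x := hwx
        have h5 : ∑ v ∈ V, w v * ⟪v, c⟫ = ⟪x, c⟫ := by
          rw [← hx', Finset.centerMass_eq_of_sum_1 _ _ hw1]
          rw [sum_inner]
          congr 1; ext v; rw [real_inner_smul_left]; rfl
        have h6 : ∑ v ∈ V, w v * (m - ⟪v, c⟫) = m * (∑ v ∈ V, w v) - ⟪x, c⟫ := by
          rw [← h5, Finset.mul_sum, ← Finset.sum_sub_distrib]
          congr 1; ext v; ring
        rw [h6, hw1, hxm]; ring
      refine (Finset.sum_eq_zero_iff_of_nonneg ?_).1 hsum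
      exact fun v hv => mul_nonneg (hw0 v hv) (by linarith [hle v hv])
    have hsupp : ∀ v ∈ V, v ∉ argmax V c → w v = 0 := by
      intro v hv hvA
      by_contra hw
      have hwpos : 0 < w v := lt_of_le_of_ne (hw0 v hv) (Ne.symm hw)
      have hvc : ⟪v, c⟫ = m := by
        have := hkey v hv
        rcases mul_eq_zero.1 this with h | h
        · exact absurd h hw
        · linarith
      exact hvA (mem_argmax.2 ⟨hv, fun u hu => by rw [hvc]; exact hle u hu⟩)
    refine ⟨w, fun y hy => hw0 y (argmax_subset hy), ?_, ?_⟩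
    · rw [← hw1]; exact Finset.sum_subset argmax_subset (fun v hv hvn => hsupp v hv hvn)
    · rw [← hwx]
      exact (Finset.centerMass_subset id argmax_subset (fun v hv hvn => hsupp v hv hvn))
  · intro y hy
    have hyP : y ∈ convexHull ℝ (V : Set (E d)) :=
      convexHull_mono (by exact_mod_cast argmax_subset) hy
    have hym : ⟪y, c⟫ = m := inner_eq_of_hull heqA y hy
    exact ⟨hyP, fun z hz => by rw [hym]; exact hhull_le z hz⟩

theorem argmax_combine (V : Finset (E d)) (hV : V.Nonempty) (c₁ c₂ : E d) :
    ∃ t : ℝ, 0 < t ∧ argmax V (t • c₁ + c₂) = argmax (argmax V c₁) c₂ := by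
  classical
  set W := argmax V c₁ with hW
  have hWne : W.Nonempty := argmax_nonempty hV c₁
  obtain ⟨v₁, hv₁⟩ := Finset.Nonempty.exists_mem hWne
  have hWne : W.Nonempty := ⟨v₁, hv₁⟩
  set m₁ : ℝ := ⟪v₁, c₁⟫ with hm₁
  have hWval : ∀ v ∈ W, ⟪v, c₁⟫ = m₁ := by
    intro v hv
    exact le_antisymm ((mem_argmax.1 hv₁).2 v (argmax_subset hv))
      ((mem_argmax.1 hv).2 v₁ (argmax_subset hv₁))
  have hVle : ∀ v ∈ V, ⟪v, c₁⟫ ≤ m₁ := (mem_argmax.1 hv₁).2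
  set B := argmax W c₂ with hB
  have hBne : B.Nonempty := argmax_nonempty hWne c₂
  obtain ⟨b₀, hb₀⟩ := Finset.Nonempty.exists_mem hBne
  set m₂ : ℝ := ⟪b₀, c₂⟫ with hm₂
  have hBval : ∀ b ∈ B, ⟪b, c₂⟫ = m₂ := by
    intro b hb
    exact le_antisymm ((mem_argmax.1 hb₀).2 b (argmax_subset hb))
      ((mem_argmax.1 hb).2 b₀ (argmax_subset hb₀))
  have hWle : ∀ v ∈ W, ⟪v, c₂⟫ ≤ m₂ := (mem_argmax.1 hb₀).2
  have hDlt : ∀ v ∈ V, v ∉ W → ⟪v, c₁⟫ < m₁ := by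
    intro v hv hvW
    rcases lt_or_eq_of_le (hVle v hv) with h | h
    · exact h
    · exact absurd (mem_argmax.2 ⟨hv, fun w hw => by rw [h]; exact hVle w hw⟩) hvW
  set D := V \ W with hD
  obtain ⟨t, ht0, htkey⟩ :
      ∃ t : ℝ, 0 < t ∧ ∀ v ∈ V, v ∉ W → t * ⟪v, c₁⟫ + ⟪v, c₂⟫ < t * m₁ + m₂ := by
    rcases D.eq_empty_or_nonempty with hDe | hDne
    · refine ⟨1, one_pos, fun v hv hvW => absurd ?_ (by simp [hDe] : v ∉ D)⟩
      exact Finset.mem_sdiff.2 ⟨hv, hvW⟩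
    · obtain ⟨vδ, hvδ, hδmin⟩ := D.exists_min_image (fun v => m₁ - ⟪v, c₁⟫) hDne
      set δ : ℝ := m₁ - ⟪vδ, c₁⟫ with hδ
      have hδ0 : 0 < δ := by
        have := hDlt vδ (Finset.mem_sdiff.1 hvδ).1 (Finset.mem_sdiff.1 hvδ).2
        simp only [hδ]; linarith
      obtain ⟨vM, hvM, hMmax⟩ := D.exists_max_image (fun v => ⟪v, c₂⟫ - m₂) hDne
      set M : ℝ := ⟪vM, c₂⟫ - m₂ with hMdef
      refine ⟨max 1 ((M + 1) / δ), lt_of_lt_of_le one_pos (le_max_left _ _), ?_⟩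
      intro v hv hvW
      have hvD : v ∈ D := Finset.mem_sdiff.2 ⟨hv, hvW⟩
      set t := max 1 ((M + 1) / δ) with htdef
      have h1 : δ ≤ m₁ - ⟪v, c₁⟫ := hδmin v hvD
      have h2 : ⟪v, c₂⟫ - m₂ ≤ M := hMmax v hvD
      have h3 : (M + 1) / δ ≤ t := le_max_right _ _
      have h4 : M + 1 ≤ t * δ := by
        rw [div_le_iff₀ hδ0] at h3; linarith
      have h5 : t * δ ≤ t * (m₁ - ⟪v, c₁⟫) :=
        mul_le_mul_of_nonneg_left h1 (le_trans one_pos.le (le_max_left _ _))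
      nlinarith
  refine ⟨t, ht0, ?_⟩
  have hval : ∀ b ∈ B, ⟪b, t • c₁ + c₂⟫ = t * m₁ + m₂ := by
    intro b hb
    rw [inner_add_right, real_inner_smul_right, hWval b (argmax_subset hb), hBval b hb]
  have hub : ∀ v ∈ V, ⟪v, t • c₁ + c₂⟫ ≤ t * m₁ + m₂ := by
    intro v hv
    rw [inner_add_right, real_inner_smul_right]
    by_cases hvW : v ∈ W
    · have := hWle v hvW
      have := hWval v hvW
      nlinarith
    · exact (htkey v hv hvW).le
  ext v
  simp only [mem_argmax]
  constructor
  · rintro ⟨hvV, hvmax⟩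
    have hveq : ⟪v, t • c₁ + c₂⟫ = t * m₁ + m₂ := by
      refine le_antisymm (hub v hvV) ?_
      rw [← hval b₀ hb₀]
      exact hvmax b₀ (argmax_subset (argmax_subset hb₀))
    have hvW : v ∈ W := by
      by_contra hvW
      have h := htkey v hvV hvW
      rw [inner_add_right, real_inner_smul_right] at hveq
      linarith
    have hvc₂ : ⟪v, c₂⟫ = m₂ := by
      rw [inner_add_right, real_inner_smul_right, hWval v hvW] at hveq
      linarith
    exact mem_argmax.2 ⟨hvW, fun w hw => by rw [hvc₂]; exact hWle w hw⟩
  · intro hvB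
    refine ⟨argmax_subset (argmax_subset hvB), fun w hw => ?_⟩
    rw [hval v hvB]
    exact hub w hw

theorem maximizers_zero (P : Set (E d)) : maximizers P (0 : E d) = P := by
  ext x
  simp [maximizers]

set_option maxHeartbeats 1000000 in
set_option synthInstance.maxHeartbeats 400000 in
theorem exists_supporting (V : Finset (E d)) (hV : V.Nonempty) {y₀ : E d}
    (hy₀ : y₀ ∈ convexHull ℝ (V : Set (E d)))
    (hni : y₀ ∉ intrinsicInterior ℝ (convexHull ℝ (V : Set (E d)))) :
    ∃ c : E d, y₀ ∈ maximizers (convexHull ℝ (V : Set (E d))) c ∧ argmax V c ≠ V := by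
  set Q : Set (E d) := convexHull ℝ (V : Set (E d)) with hQ
  have hQconv : Convex ℝ Q := convex_convexHull ℝ _
  have hQne : Q.Nonempty := ⟨y₀, hy₀⟩
  set A := affineSpan ℝ Q with hA
  have hy₀A : y₀ ∈ A := subset_affineSpan ℝ Q hy₀
  set Dsub := A.direction with hDsub
  obtain ⟨z₀, hz₀⟩ := Set.Nonempty.intrinsicInterior hQconv hQne
  set S : Set Dsub := {p | (p : E d) + y₀ ∈ intrinsicInterior ℝ Q} with hS
  have hSmem : ∀ z ∈ intrinsicInterior ℝ Q, ∃ p : Dsub, (p : E d) = z - y₀ ∧ p ∈ S := by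
    intro z hz
    have hzA : z ∈ A := subset_affineSpan ℝ Q (intrinsicInterior_subset hz)
    have : z - y₀ ∈ Dsub := by
      have := AffineSubspace.vsub_mem_direction hzA hy₀A
      simpa [vsub_eq_sub] using this
    refine ⟨⟨z - y₀, this⟩, rfl, ?_⟩
    show ((⟨z - y₀, this⟩ : Dsub) : E d) + y₀ ∈ intrinsicInterior ℝ Q
    simpa using hz
  have hSconv : Convex ℝ S := by
    intro p hp q hq a b ha hb hab
    have h1 : ((a • p + b • q : Dsub) : E d) + y₀
        = a • ((p : E d) + y₀) + b • ((q : E d) + y₀) := by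
      push_cast
      match_scalars <;> linarith [hab]
    show ((a • p + b • q : Dsub) : E d) + y₀ ∈ intrinsicInterior ℝ Q
    rw [h1]
    exact convex_II hQconv hp hq ha hb hab
  have hSopen : IsOpen S := by
    rw [Metric.isOpen_iff]
    intro p hp
    have hx : (p : E d) + y₀ ∈ intrinsicInterior ℝ Q := hp
    have hxQ : (p : E d) + y₀ ∈ Q := intrinsicInterior_subset hx
    obtain ⟨ε, hε, h⟩ := (mem_II_iff hxQ).1 hx
    refine ⟨ε / 2, by positivity, fun q hq => ?_⟩
    have hdist : ‖(q : E d) - p‖ < ε / 2 := by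
      have : dist q p < ε / 2 := hq
      rw [Subtype.dist_eq, dist_eq_norm] at this
      exact this
    set z : E d := (q : E d) + y₀ with hzdef
    have hzA : z ∈ A := by
      have := AffineSubspace.vadd_mem_of_mem_direction q.2 hy₀A
      simpa [vadd_eq_add, hzdef] using this
    have hzQ : z ∈ Q := by
      refine h z hzA ?_
      rw [dist_eq_norm]
      have : z - ((p : E d) + y₀) = (q : E d) - p := by simp [hzdef]
      rw [this]; linarith
    show z ∈ intrinsicInterior ℝ Q
    rw [mem_II_iff hzQ]
    refine ⟨ε / 2, by positivity, fun u hu hdu => ?_⟩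
    refine h u hu ?_
    have : dist u ((p : E d) + y₀) ≤ dist u z + dist z ((p : E d) + y₀) := dist_triangle _ _ _
    have h2 : dist z ((p : E d) + y₀) < ε / 2 := by
      rw [dist_eq_norm]
      have h3 : z - ((p : E d) + y₀) = (q : E d) - p := by simp [hzdef]
      rw [h3]; exact hdist
    linarith
  have h0S : (0 : Dsub) ∉ S := by
    intro h
    exact hni (by simpa [hS] using h)
  obtain ⟨f, hf⟩ := geometric_hahn_banach_open_point hSconv hSopen h0S
  have hf0 : ∀ a ∈ S, f a < 0 := by
    intro a ha
    have := hf a ha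
    simpa using this
  set w : Dsub := (InnerProductSpace.toDual ℝ Dsub).symm f with hw
  have hwf : ∀ a : Dsub, ⟪w, a⟫ = f a := fun a => InnerProductSpace.toDual_symm_apply
  set c : E d := (w : E d) with hc
  have hkey : ∀ z ∈ intrinsicInterior ℝ Q, ⟪z, c⟫ < ⟪y₀, c⟫ := by
    intro z hz
    obtain ⟨p, hpz, hpS⟩ := hSmem z hz
    have := hf0 p hpS
    rw [← hwf p] at this
    have hinner : ⟪w, p⟫ = ⟪c, z - y₀⟫ := by
      rw [Submodule.coe_inner, hc, hpz]
    rw [hinner, inner_sub_right] at this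
    have := real_inner_comm c z
    have := real_inner_comm c y₀
    linarith [this]
  have hle : ∀ q ∈ Q, ⟪q, c⟫ ≤ ⟪y₀, c⟫ := by
    intro q hq
    by_contra hlt
    push_neg at hlt
    set a : ℝ := ⟪z₀, c⟫ with ha
    set b : ℝ := ⟪q, c⟫ with hb
    set Y : ℝ := ⟪y₀, c⟫ with hY
    have hbY : Y < b := hlt
    set t : ℝ := min 1 ((b - Y) / (|a - b| + 1)) with htdef
    have habs : (0:ℝ) ≤ |a - b| := abs_nonneg _
    have ht0 : 0 < t := lt_min one_pos (div_pos (by linarith) (by positivity))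
    have ht1 : t ≤ 1 := min_le_left _ _
    have ht2 : t * (|a - b| + 1) ≤ b - Y := by
      have h3 : t ≤ (b - Y) / (|a - b| + 1) := min_le_right _ _
      rw [le_div_iff₀ (by positivity)] at h3
      linarith
    have hcombo := combo_mem_II hQconv hz₀ hq ht0 ht1
    have hval := hkey _ hcombo
    rw [inner_add_left, real_inner_smul_left, real_inner_smul_left] at hval
    have hlow : -(t * |a - b|) ≤ t * (a - b) := by
      have := neg_abs_le (a - b)
      nlinarith
    nlinarith
  have hz₀lt : ⟪z₀, c⟫ < ⟪y₀, c⟫ := hkey z₀ hz₀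
  refine ⟨c, ⟨hy₀, hle⟩, ?_⟩
  intro hargmax
  obtain ⟨v₁, hv₁⟩ := argmax_nonempty hV c
  have hallv : ∀ v ∈ V, ⟪v, c⟫ = ⟪v₁, c⟫ := by
    intro v hv
    have hvA : v ∈ argmax V c := by rw [hargmax]; exact hv
    exact argmax_inner_eq hv₁ hvA
  have h1 : ⟪z₀, c⟫ = ⟪v₁, c⟫ :=
    inner_eq_of_hull hallv z₀ (intrinsicInterior_subset hz₀)
  have h2 : ⟪y₀, c⟫ = ⟪v₁, c⟫ := inner_eq_of_hull hallv y₀ hy₀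
  rw [h1, h2] at hz₀lt
  exact lt_irrefl _ hz₀lt

theorem isFace_maximizers {P : Set (E d)} (c : E d) : IsFace P (maximizers P c) := by
  by_cases hc : c = 0
  · subst hc
    exact Or.inr (Or.inl (maximizers_zero P))
  · exact Or.inr (Or.inr ⟨c, hc, rfl⟩)

theorem exists_face_relint_aux :
    ∀ (n : ℕ) (V : Finset (E d)), V.card ≤ n → V.Nonempty → ∀ y₀ ∈ convexHull ℝ (V : Set (E d)),
      ∃ c : E d, y₀ ∈ intrinsicInterior ℝ (maximizers (convexHull ℝ (V : Set (E d))) c) := by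
  intro n
  induction n with
  | zero =>
    intro V hcard hV y₀ hy₀
    exact absurd (Finset.card_pos.2 hV) (by omega)
  | succ n ih =>
    intro V hcard hV y₀ hy₀
    by_cases hri : y₀ ∈ intrinsicInterior ℝ (convexHull ℝ (V : Set (E d)))
    · exact ⟨0, by rwa [maximizers_zero]⟩
    · obtain ⟨c₁, hy₀max, hne⟩ := exists_supporting V hV hy₀ hri
      set W := argmax V c₁ with hW
      have hWsub : W ⊆ V := argmax_subset
      have hWne : W.Nonempty := argmax_nonempty hV c₁
      have hWcard : W.card ≤ n := by
        have hlt : W.card < V.card := Finset.card_lt_card (ssubset_of_subset_of_ne hWsub hne)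
        omega
      have hy₀W : y₀ ∈ convexHull ℝ (W : Set (E d)) := by
        rw [← maximizers_hull V hV c₁]
        exact hy₀max
      obtain ⟨c₂, hc₂⟩ := ih W hWcard hWne y₀ hy₀W
      obtain ⟨t, ht0, hteq⟩ := argmax_combine V hV c₁ c₂
      refine ⟨t • c₁ + c₂, ?_⟩
      have h1 : maximizers (convexHull ℝ (V : Set (E d))) (t • c₁ + c₂)
          = maximizers (convexHull ℝ (W : Set (E d))) c₂ := by
        rw [maximizers_hull V hV _, maximizers_hull W hWne c₂, hteq]
      rw [h1]
      exact hc₂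

theorem polarDual_convex (P : Set (E d)) : Convex ℝ (polarDual P) := by
  intro v₁ h₁ v₂ h₂ a b ha hb hab
  intro y hy
  have e : ⟪a • v₁ + b • v₂, y⟫ = a * ⟪v₁, y⟫ + b * ⟪v₂, y⟫ := by
    rw [inner_add_left, real_inner_smul_left, real_inner_smul_left]
  rw [e]
  nlinarith [h₁ y hy, h₂ y hy]

theorem maximizers_convex {P : Set (E d)} (hP : Convex ℝ P) (c : E d) :
    Convex ℝ (maximizers P c) := by
  rintro v₁ ⟨h₁P, h₁⟩ v₂ ⟨h₂P, h₂⟩ a b ha hb hab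
  refine ⟨hP h₁P h₂P ha hb hab, fun y hy => ?_⟩
  have e : ⟪a • v₁ + b • v₂, c⟫ = a * ⟪v₁, c⟫ + b * ⟪v₂, c⟫ := by
    rw [inner_add_left, real_inner_smul_left, real_inner_smul_left]
  rw [e]
  have hsum : a * ⟪y, c⟫ + b * ⟪y, c⟫ = ⟪y, c⟫ := by rw [← add_mul, hab, one_mul]
  nlinarith [mul_le_mul_of_nonneg_left (h₁ y hy) ha,
    mul_le_mul_of_nonneg_left (h₂ y hy) hb]

theorem mem_polarDual_hull {V : Finset (E d)} {q : E d}
    (h : ∀ v ∈ V, ⟪q, v⟫ ≤ 1) : q ∈ polarDual (convexHull ℝ (V : Set (E d))) := by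
  have hlin : IsLinearMap ℝ (fun y : E d => ⟪q, y⟫) :=
    ⟨fun a b => by rw [inner_add_right], fun r a => by
      rw [real_inner_smul_right, smul_eq_mul]⟩
  intro y hy
  exact convexHull_min h (convex_halfSpace_le hlin 1) hy

theorem dual_inner_eq {P F : Set (E d)} (hFP : F ⊆ P) {y f v : E d}
    (hy : y ∈ intrinsicInterior ℝ F) (hf : f ∈ F) (hv : v ∈ polarDual P)
    (h1 : ⟪v, y⟫ = 1) : ⟪v, f⟫ = 1 := by
  have hle : ⟪v, f⟫ ≤ 1 := hv f (hFP hf)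
  obtain ⟨t, ht0, hz⟩ := extend_mem hy hf
  have hzle : ⟪v, y + t • (y - f)⟫ ≤ 1 := hv _ (hFP hz)
  rw [inner_add_right, real_inner_smul_right, inner_sub_right, h1] at hzle
  nlinarith

end Aux

set_option maxHeartbeats 1000000 in
theorem dual_of_perfectlyCentered_is_perfectlyCentered {d : ℕ} (P : Set (E d))
    (hP : IsPolytope P) (hfull : affineSpan ℝ P = ⊤)
    (hpc : IsPerfectlyCentered P) :
    IsPerfectlyCentered (polarDual P) := by
  obtain ⟨V, hVne, hPV⟩ := hP
  intro F' hF'face hF'ne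
  have hPconv : Convex ℝ P := hPV ▸ convex_convexHull ℝ _
  have hPcompact : IsCompact P := hPV ▸ V.finite_toSet.isCompact_convexHull ℝ
  have hPclosed : IsClosed P := hPcompact.isClosed
  have hPne : P.Nonempty := by
    obtain ⟨v, hv⟩ := hVne
    exact ⟨v, hPV ▸ subset_convexHull ℝ _ hv⟩
  -- `0` is in the relative interior of `P`
  obtain ⟨x₀, hx₀II, hx₀N⟩ := hpc P (Or.inr (Or.inl rfl)) hPne
  have hx₀N' : maximizers P x₀ = P := hx₀N
  have hx₀0 : x₀ = 0 := by
    have hconst : ∀ y ∈ P, ∀ z ∈ P, ⟪y - z, x₀⟫ = 0 := by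
      intro y hy z hz
      have h1 : ∀ w ∈ P, ⟪w, x₀⟫ ≤ ⟪y, x₀⟫ := by
        have hmem : y ∈ maximizers P x₀ := by rw [hx₀N']; exact hy
        exact hmem.2
      have h2 : ∀ w ∈ P, ⟪w, x₀⟫ ≤ ⟪z, x₀⟫ := by
        have hmem : z ∈ maximizers P x₀ := by rw [hx₀N']; exact hz
        exact hmem.2
      have := h1 z hz
      have := h2 y hy
      rw [inner_sub_left]
      linarith
    have htop : vectorSpan ℝ P = ⊤ := by
      have h := direction_affineSpan ℝ P
      rw [hfull, AffineSubspace.direction_top] at h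
      exact h.symm
    have hx₀mem : x₀ ∈ vectorSpan ℝ P := by rw [htop]; trivial
    have hzero : ∀ v ∈ vectorSpan ℝ P, ⟪v, x₀⟫ = 0 := by
      intro v hv
      rw [vectorSpan_def] at hv
      induction hv using Submodule.span_induction with
      | mem w hw =>
        obtain ⟨y, hy, z, hz, rfl⟩ := hw
        have := hconst y hy z hz
        simpa [vsub_eq_sub] using this
      | zero => exact inner_zero_left _
      | add w₁ w₂ _ _ h₁ h₂ => rw [inner_add_left, h₁, h₂]; ring
      | smul r w _ h => rw [real_inner_smul_left, h]; ring
    exact inner_self_eq_zero.1 (hzero x₀ hx₀mem)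
  rw [hx₀0] at hx₀II
  have h0P : (0 : E d) ∈ P := intrinsicInterior_subset hx₀II
  -- a bound for P
  obtain ⟨R₀, hR₀⟩ := hPcompact.isBounded.subset_closedBall 0
  set R : ℝ := max R₀ 1 with hRdef
  have hR1 : (0:ℝ) < R := lt_of_lt_of_le one_pos (le_max_right _ _)
  have hRbound : ∀ y ∈ P, ‖y‖ ≤ R := by
    intro y hy
    have := hR₀ hy
    rw [Metric.mem_closedBall, dist_zero_right] at this
    exact le_trans this (le_max_left _ _)
  rcases hF'face with hF'e | hF'P | ⟨c, hc0, hF'eq⟩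
  · exact absurd hF'e (Set.nonempty_iff_ne_empty.1 hF'ne)
  · subst hF'P
    have h0polar : (0 : E d) ∈ polarDual P := by
      intro y hy
      rw [inner_zero_left]
      norm_num
    refine ⟨0, ?_, ?_⟩
    · rw [mem_II_iff h0polar]
      refine ⟨R⁻¹, by positivity, fun z hz hdist => ?_⟩
      intro y hy
      rw [dist_zero_right] at hdist
      have hcs : ⟪z, y⟫ ≤ ‖z‖ * ‖y‖ := real_inner_le_norm z y
      have h1 : ‖z‖ * ‖y‖ ≤ ‖z‖ * R := mul_le_mul_of_nonneg_left (hRbound y hy) (norm_nonneg z)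
      have h2 : ‖z‖ * R ≤ R⁻¹ * R := mul_le_mul_of_nonneg_right hdist.le hR1.le
      rw [inv_mul_cancel₀ hR1.ne'] at h2
      linarith
    · show maximizers (polarDual P) 0 = polarDual P
      exact maximizers_zero _
  · -- main case
    obtain ⟨v₀, hv₀⟩ := hF'ne
    have hv₀' : v₀ ∈ maximizers (polarDual P) c := by rw [← hF'eq]; exact hv₀
    obtain ⟨hv₀polar, hv₀max⟩ := hv₀'
    set m' : ℝ := ⟪v₀, c⟫ with hm'def
    have hm' : 0 < m' := by
      have hcnorm : 0 < ‖c‖ := norm_pos_iff.2 hc0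
      set v : E d := (R * ‖c‖)⁻¹ • c with hvdef
      have hvpolar : v ∈ polarDual P := by
        intro y hy
        rw [hvdef, real_inner_smul_left]
        have hcs : ⟪c, y⟫ ≤ ‖c‖ * ‖y‖ := real_inner_le_norm c y
        have h1 : ‖c‖ * ‖y‖ ≤ ‖c‖ * R := mul_le_mul_of_nonneg_left (hRbound y hy) (norm_nonneg c)
        calc (R * ‖c‖)⁻¹ * ⟪c, y⟫ ≤ (R * ‖c‖)⁻¹ * (‖c‖ * R) :=
              mul_le_mul_of_nonneg_left (le_trans hcs h1) (by positivity)
          _ = 1 := by rw [mul_comm ‖c‖ R]; exact inv_mul_cancel₀ (by positivity)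
      have hvc : ⟪v, c⟫ = (R * ‖c‖)⁻¹ * ‖c‖^2 := by
        rw [hvdef, real_inner_smul_left, real_inner_self_eq_norm_sq]
      have h1 := hv₀max v hvpolar
      rw [hvc] at h1
      have h2 : 0 < (R * ‖c‖)⁻¹ * ‖c‖^2 := by positivity
      linarith
    obtain ⟨y₀, hy₀def⟩ : ∃ y : E d, y = m'⁻¹ • c := ⟨_, rfl⟩
    have hy₀dual : ∀ v ∈ polarDual P, ⟪v, y₀⟫ ≤ 1 := by
      intro v hv
      rw [hy₀def, real_inner_smul_right]
      calc m'⁻¹ * ⟪v, c⟫ ≤ m'⁻¹ * m' :=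
            mul_le_mul_of_nonneg_left (hv₀max v hv) (inv_nonneg.2 hm'.le)
        _ = 1 := inv_mul_cancel₀ hm'.ne'
    have hy₀P : y₀ ∈ P := by
      by_contra hy₀nP
      obtain ⟨f, u, hfu, hufy⟩ := geometric_hahn_banach_closed_point hPconv hPclosed hy₀nP
      have hu0 : 0 < u := by
        have := hfu 0 h0P
        simpa using this
      set w : E d := (InnerProductSpace.toDual ℝ (E d)).symm f with hwdef
      have hwf : ∀ a : E d, ⟪w, a⟫ = f a := fun a => InnerProductSpace.toDual_symm_apply
      have hvpolar : u⁻¹ • w ∈ polarDual P := by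
        intro y hy
        rw [real_inner_smul_left, hwf]
        calc u⁻¹ * f y ≤ u⁻¹ * u :=
              mul_le_mul_of_nonneg_left (hfu y hy).le (inv_nonneg.2 hu0.le)
          _ = 1 := inv_mul_cancel₀ hu0.ne'
      have h2 := hy₀dual _ hvpolar
      rw [real_inner_smul_left, hwf] at h2
      have h3 : u⁻¹ * u < u⁻¹ * f y₀ := mul_lt_mul_of_pos_left hufy (inv_pos.2 hu0)
      rw [inv_mul_cancel₀ hu0.ne'] at h3
      linarith
    have hvy₀c : ∀ v : E d, ⟪v, c⟫ = m' * ⟪v, y₀⟫ := by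
      intro v
      rw [hy₀def, real_inner_smul_right, ← mul_assoc, mul_inv_cancel₀ hm'.ne', one_mul]
    have hF'char : F' = {v | v ∈ polarDual P ∧ ⟪v, y₀⟫ = 1} := by
      rw [hF'eq]
      ext v
      constructor
      · rintro ⟨hvp, hvmax⟩
        have h1 : ⟪v, c⟫ ≤ m' := hv₀max v hvp
        have h2 : m' ≤ ⟪v, c⟫ := hvmax v₀ hv₀polar
        have h3 : ⟪v, c⟫ = m' := le_antisymm h1 h2
        refine ⟨hvp, ?_⟩
        have := hvy₀c v
        rw [h3] at this
        have h4 : m' * 1 = m' * ⟪v, y₀⟫ := by rw [mul_one]; exact this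
        exact (mul_left_cancel₀ hm'.ne' h4).symm
      · rintro ⟨hvp, hv1⟩
        refine ⟨hvp, fun y hy => ?_⟩
        have hvc : ⟪v, c⟫ = m' := by rw [hvy₀c v, hv1, mul_one]
        rw [hvc]
        exact hv₀max y hy
    have hv₀y₀ : ⟪v₀, y₀⟫ = 1 := by
      have hmem : v₀ ∈ {v | v ∈ polarDual P ∧ ⟪v, y₀⟫ = 1} := by rw [← hF'char]; exact hv₀
      exact hmem.2
    -- minimal face of P containing y₀ in its relative interior
    have hy₀hull : y₀ ∈ convexHull ℝ (V : Set (E d)) := by rw [← hPV]; exact hy₀P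
    obtain ⟨c₁, hc₁⟩ := exists_face_relint_aux V.card V le_rfl hVne y₀ hy₀hull
    rw [← hPV] at hc₁
    set F : Set (E d) := maximizers P c₁ with hFdef
    have hFface : IsFace P F := isFace_maximizers c₁
    have hy₀F : y₀ ∈ intrinsicInterior ℝ F := hc₁
    have hy₀Fm : y₀ ∈ F := intrinsicInterior_subset hy₀F
    have hFne : F.Nonempty := ⟨y₀, hy₀Fm⟩
    have hFsubP : F ⊆ P := fun z hz => hz.1
    obtain ⟨x, hxII, hxN⟩ := hpc F hFface hFne
    have hxN' : maximizers P x = F := hxN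
    have hxF : x ∈ F := intrinsicInterior_subset hxII
    have hxP : x ∈ P := hFsubP hxF
    have hxne : x ≠ 0 := by
      intro hx0
      have hFP : F = P := by rw [← hxN', hx0, maximizers_zero]
      rw [hFP] at hy₀F
      have hv₀0 : v₀ ≠ 0 := by
        intro h
        rw [h, inner_zero_left] at hv₀y₀
        norm_num at hv₀y₀
      have hv₀n : 0 < ‖v₀‖ := norm_pos_iff.2 hv₀0
      obtain ⟨ε, hε, hball⟩ := (mem_II_iff hy₀P).1 hy₀F
      obtain ⟨z, hzdef⟩ : ∃ z : E d, z = y₀ + (ε / (2 * ‖v₀‖)) • v₀ := ⟨_, rfl⟩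
      have hzspan : z ∈ affineSpan ℝ P := by rw [hfull]; trivial
      have hzP : z ∈ P := by
        refine hball z hzspan ?_
        have hdz : z - y₀ = (ε / (2 * ‖v₀‖)) • v₀ := by rw [hzdef]; abel
        rw [dist_eq_norm, hdz, norm_smul, Real.norm_eq_abs,
          abs_of_pos (by positivity : (0:ℝ) < ε / (2 * ‖v₀‖))]
        rw [div_mul_eq_mul_div, div_lt_iff₀ (by positivity)]
        nlinarith
      have hle : ⟪v₀, z⟫ ≤ 1 := hv₀polar z hzP
      have hcontr : ⟪v₀, z⟫ = 1 + (ε / (2 * ‖v₀‖)) * ‖v₀‖^2 := by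
        rw [hzdef, inner_add_right, real_inner_smul_right, hv₀y₀,
          real_inner_self_eq_norm_sq]
      rw [hcontr] at hle
      have hpos : 0 < ε / (2 * ‖v₀‖) * ‖v₀‖^2 := by positivity
      linarith
    have hq : 0 < ⟪x, x⟫ := by
      rw [real_inner_self_eq_norm_sq]
      have := norm_pos_iff.2 hxne
      positivity
    have hmaxx : ∀ y ∈ P, ⟪y, x⟫ ≤ ⟪x, x⟫ := by
      have hmem : x ∈ maximizers P x := by rw [hxN']; exact hxF
      exact hmem.2
    obtain ⟨nx, hnxdef⟩ : ∃ n : ℝ, n = ⟪x, x⟫ := ⟨_, rfl⟩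
    have hqn : 0 < nx := hnxdef ▸ hq
    obtain ⟨u, hudef⟩ : ∃ u : E d, u = nx⁻¹ • x := ⟨_, rfl⟩
    have einner : ∀ a : E d, ⟪a, u⟫ = nx⁻¹ * ⟪a, x⟫ := fun a => by
      rw [hudef, real_inner_smul_right]
    have einner' : ∀ a : E d, ⟪u, a⟫ = nx⁻¹ * ⟪x, a⟫ := fun a => by
      rw [hudef, real_inner_smul_left]
    have hux : ⟪u, x⟫ = 1 := by
      rw [einner' x, ← hnxdef]
      exact inv_mul_cancel₀ hqn.ne'
    have hupolar : u ∈ polarDual P := by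
      intro y hy
      rw [einner' y]
      calc nx⁻¹ * ⟪x, y⟫ ≤ nx⁻¹ * nx := by
            refine mul_le_mul_of_nonneg_left ?_ (inv_nonneg.2 hqn.le)
            rw [real_inner_comm, hnxdef]
            exact hmaxx y hy
        _ = 1 := inv_mul_cancel₀ hqn.ne'
    have hzx1 : ⟪y₀, x⟫ = ⟪x, x⟫ := by
      have h1 : y₀ ∈ maximizers P x := by rw [hxN']; exact hy₀Fm
      exact le_antisymm (hmaxx y₀ hy₀P) (h1.2 x hxP)
    have hxchar : ∀ v ∈ polarDual P, (⟪v, y₀⟫ = 1 ↔ ⟪v, x⟫ = 1) := by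
      intro v hv
      constructor
      · intro h; exact dual_inner_eq hFsubP hy₀F hxF hv h
      · intro h; exact dual_inner_eq hFsubP hxII hy₀Fm hv h
    have hF'x : F' = {v | v ∈ polarDual P ∧ ⟪v, x⟫ = 1} := by
      rw [hF'char]
      ext v
      constructor
      · rintro ⟨hv, h1⟩; exact ⟨hv, (hxchar v hv).1 h1⟩
      · rintro ⟨hv, h1⟩; exact ⟨hv, (hxchar v hv).2 h1⟩
    have huF' : u ∈ F' := by rw [hF'x]; exact ⟨hupolar, hux⟩
    have hNC : maximizers (polarDual P) u = F' := by
      rw [hF'x]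
      ext v
      constructor
      · rintro ⟨hvp, hvmax⟩
        refine ⟨hvp, ?_⟩
        have h1 : ⟪v, x⟫ ≤ 1 := hvp x hxP
        have h2 : ⟪u, u⟫ ≤ ⟪v, u⟫ := hvmax u hupolar
        rw [einner u, einner v, hux] at h2
        have h4 : (1:ℝ) ≤ ⟪v, x⟫ :=
          le_of_mul_le_mul_left (by linarith) (inv_pos.2 hqn)
        linarith
      · rintro ⟨hvp, hv1⟩
        refine ⟨hvp, fun y hy => ?_⟩
        rw [einner y, einner v, hv1]
        refine mul_le_mul_of_nonneg_left ?_ (inv_nonneg.2 hqn.le)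
        exact hy x hxP
    have hF'conv : Convex ℝ F' := by
      rw [hF'eq]
      exact maximizers_convex (polarDual_convex P) c
    obtain ⟨z, hzII⟩ := Set.Nonempty.intrinsicInterior hF'conv ⟨u, huF'⟩
    have hzF' : z ∈ F' := intrinsicInterior_subset hzII
    have hzx : ⟪z, x⟫ = 1 := by
      have := hzF'; rw [hF'x] at this; exact this.2
    have hzp : z ∈ polarDual P := by
      have := hzF'; rw [hF'x] at this; exact this.1
    have hδstep : ∃ δ : ℝ, 0 < δ ∧ u + δ • (u - z) ∈ F' := by
      classical
      set g : E d → ℝ := fun v =>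
        if ⟪u, v⟫ < 1 then (1 - ⟪u, v⟫) / (max (⟪u, v⟫ - ⟪z, v⟫) 1) else 1 with hg
      have hgpos : ∀ v ∈ V, 0 < g v := by
        intro v hv
        by_cases h : ⟪u, v⟫ < 1
        · rw [hg]; simp only [if_pos h]
          exact div_pos (by linarith) (lt_of_lt_of_le one_pos (le_max_right _ _))
        · rw [hg]; simp only [if_neg h]; exact one_pos
      set δ := V.inf' hVne g with hδdef
      have hδpos : 0 < δ := (Finset.lt_inf'_iff hVne).2 hgpos
      refine ⟨δ, hδpos, ?_⟩
      rw [hF'x]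
      constructor
      · show u + δ • (u - z) ∈ polarDual P
        rw [hPV]
        apply mem_polarDual_hull
        intro v hv
        have hvP : v ∈ P := by rw [hPV]; exact subset_convexHull ℝ _ hv
        have hau : ⟪u, v⟫ ≤ 1 := hupolar v hvP
        have hbz : ⟪z, v⟫ ≤ 1 := hzp v hvP
        have hinner : ⟪u + δ • (u - z), v⟫ = ⟪u, v⟫ + δ * (⟪u, v⟫ - ⟪z, v⟫) := by
          rw [inner_add_left, real_inner_smul_left, inner_sub_left]
        rw [hinner]
        rcases eq_or_lt_of_le hau with heq | hlt
        · -- boundary vertex: v ∈ F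
          have h5 : nx⁻¹ * ⟪x, v⟫ = 1 := by rw [← einner' v]; exact heq
          have hvx : ⟪x, v⟫ = nx := by
            have h6 : nx * (nx⁻¹ * ⟪x, v⟫) = nx * 1 := by rw [h5]
            rwa [← mul_assoc, mul_inv_cancel₀ hqn.ne', one_mul, mul_one] at h6
          have hvF : v ∈ F := by
            rw [← hxN']
            refine ⟨hvP, fun y hy => ?_⟩
            calc ⟪y, x⟫ ≤ ⟪x, x⟫ := hmaxx y hy
              _ = nx := hnxdef.symm
              _ = ⟪x, v⟫ := hvx.symm
              _ = ⟪v, x⟫ := real_inner_comm v x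
          have hz1 : ⟪z, v⟫ = 1 := dual_inner_eq hFsubP hxII hvF hzp hzx
          rw [heq, hz1]
          norm_num
        · have hδle : δ ≤ g v := Finset.inf'_le g hv
          have hgv : g v = (1 - ⟪u, v⟫) / (max (⟪u, v⟫ - ⟪z, v⟫) 1) := by
            rw [hg]; simp only [if_pos hlt]
          set M : ℝ := max (⟪u, v⟫ - ⟪z, v⟫) 1 with hMdef
          have hM1 : (1:ℝ) ≤ M := le_max_right _ _
          have hMge : ⟪u, v⟫ - ⟪z, v⟫ ≤ M := le_max_left _ _
          have hδM : δ * M ≤ 1 - ⟪u, v⟫ := by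
            rw [hgv, le_div_iff₀ (by linarith)] at hδle
            linarith
          have h6 : δ * (⟪u, v⟫ - ⟪z, v⟫) ≤ δ * M := mul_le_mul_of_nonneg_left hMge hδpos.le
          linarith
      · show ⟪u + δ • (u - z), x⟫ = 1
        rw [inner_add_left, real_inner_smul_left, inner_sub_left, hux, hzx]
        ring
    obtain ⟨δ, hδpos, huδ⟩ := hδstep
    set t : ℝ := δ / (1 + δ) with htdef
    have ht0 : 0 < t := by positivity
    have ht1 : t ≤ 1 := by
      rw [htdef, div_le_one (by linarith)]
      linarith
    have hcombo := combo_mem_II hF'conv hzII huδ ht0 ht1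
    have huu : t • z + (1 - t) • (u + δ • (u - z)) = u := by
      have h1δ : (1:ℝ) + δ ≠ 0 := by linarith
      rw [htdef]
      match_scalars <;> field_simp <;> ring
    rw [huu] at hcombo
    exact ⟨u, hcombo, hNC⟩
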